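/- arXiv:2001.03842 — 3 statements merged into one kernel-verified Lean document; each statement's English description precedes it below -/
import Mathlib

section
/- Let ω : [0,∞) → [0,∞) be a strong modulus of continuity (continuous on [0,∞), C² on (0,∞), nondecreasing, concave, ω(0)=0, 0 < ω'(0) < ∞, and ω''(ξ) → −∞ as ξ → 0⁺). If θ ∈ C²(ℝ^d) satisfies |θ(x) − θ(y)| ≤ ω(|x−y|) for all x, y, and the supremum of |∇θ| is attained at some point, then sup_x |∇θ(x)| < ω'(0). -/
open Real Set Filter

/-- If ω is a strong modulus of continuity (continuous on [0,∞), C² on (0,∞),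
nondecreasing, concave, ω(0)=0, finite positive right derivative ω'(0) at 0,
ω''(ξ) → −∞ as ξ → 0⁺), θ ∈ C²(ℝ^d) has modulus of continuity ω, and the supremum of
|∇θ| is attained at some point, then sup |∇θ| < ω'(0). -/
theorem stmt2 {d : ℕ} (ω ω' ω'' : ℝ → ℝ) (ω'0 : ℝ)
    (θ : EuclideanSpace ℝ (Fin d) → ℝ)
    (hωc : ContinuousOn ω (Set.Ici 0))
    (hωmono : MonotoneOn ω (Set.Ici 0))
    (hωconc : ConcaveOn ℝ (Set.Ici 0) ω)
    (hω0 : ω 0 = 0)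
    (hω' : ∀ ξ > (0:ℝ), HasDerivAt ω (ω' ξ) ξ)
    (hω'' : ∀ ξ > (0:ℝ), HasDerivAt ω' (ω'' ξ) ξ)
    (hω'cont : ContinuousOn ω' (Set.Ioi 0))
    (hω''cont : ContinuousOn ω'' (Set.Ioi 0))
    (hω'0pos : 0 < ω'0)
    (hω'0 : Tendsto ω' (nhdsWithin 0 (Set.Ioi 0)) (nhds ω'0))
    (hω''blow : Tendsto ω'' (nhdsWithin 0 (Set.Ioi 0)) atBot)
    (hθ : ContDiff ℝ 2 θ)
    (hmod : ∀ x y : EuclideanSpace ℝ (Fin d), |θ x - θ y| ≤ ω (dist x y))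
    (x₀ : EuclideanSpace ℝ (Fin d))
    (hmax : ∀ x, ‖fderiv ℝ θ x‖ ≤ ‖fderiv ℝ θ x₀‖) :
    ∀ x, ‖fderiv ℝ θ x‖ < ω'0 := by
  intro x
  suffices h : ‖fderiv ℝ θ x₀‖ < ω'0 from lt_of_le_of_lt (hmax x) h
  set M := ‖fderiv ℝ θ x₀‖ with hM
  -- ω' is antitone on (0,∞)
  have hconc' : ConcaveOn ℝ (Set.Ioi (0:ℝ)) ω :=
    hωconc.subset Set.Ioi_subset_Ici_self (convex_Ioi 0)
  have hanti : AntitoneOn ω' (Set.Ioi (0:ℝ)) := by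
    have h := hconc'.antitoneOn_deriv (fun c hc => (hω' c hc).differentiableAt)
    intro a ha b hb hab
    have h2 := h ha hb hab
    rwa [(hω' a ha).deriv, (hω' b hb).deriv] at h2
  -- ω' c ≤ ω'0 for c > 0
  have hω'le : ∀ c > (0:ℝ), ω' c ≤ ω'0 := by
    intro c hc
    refine ge_of_tendsto hω'0 ?_
    filter_upwards [Ioo_mem_nhdsGT_of_mem (⟨le_refl 0, hc⟩ : (0:ℝ) ∈ Set.Ico 0 c)] with s hs
    exact hanti hs.1 hc hs.2.le
  -- ω t ≤ ω'0 * t on [0,∞)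
  have hωle : ∀ t : ℝ, 0 ≤ t → ω t ≤ ω'0 * t := by
    have hmono : MonotoneOn (fun s => ω'0 * s - ω s) (Set.Ici (0:ℝ)) := by
      apply monotoneOn_of_deriv_nonneg (convex_Ici 0)
      · exact (continuousOn_const.mul continuousOn_id).sub hωc
      · rw [interior_Ici]
        intro s hs
        exact ((differentiableAt_id.const_mul ω'0).sub
          (hω' s hs).differentiableAt).differentiableWithinAt
      · rw [interior_Ici]
        intro s hs
        have h1 : HasDerivAt (fun s => ω'0 * s - ω s) (ω'0 * 1 - ω' s) s :=
          ((hasDerivAt_id s).const_mul ω'0).sub (hω' s hs)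
        rw [h1.deriv]
        have := hω'le s hs
        linarith
    intro t ht
    have h2 := hmono (self_mem_Ici) ht ht
    simp only [mul_zero, hω0, sub_zero] at h2
    linarith
  -- θ is Lipschitz with constant ω'0, so M ≤ ω'0
  have hLip : LipschitzWith ⟨ω'0, hω'0pos.le⟩ θ := by
    apply LipschitzWith.of_dist_le_mul
    intro a b
    calc dist (θ a) (θ b) = |θ a - θ b| := Real.dist_eq _ _
    _ ≤ ω (dist a b) := hmod a b
    _ ≤ ω'0 * dist a b := hωle _ dist_nonneg
  have hMle : M ≤ ω'0 := by
    have := norm_fderiv_le_of_lipschitz ℝ hLip (x₀ := x₀)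
    exact this
  rcases lt_or_eq_of_le hMle with h | hMeq
  · exact h
  exfalso
  -- From here on, M = ω'0 > 0; derive a contradiction
  have hMpos : 0 < M := hMeq ▸ hω'0pos
  set L := fderiv ℝ θ x₀ with hL
  -- find a unit vector v with L v = M
  obtain ⟨v, hvnorm, hLv⟩ : ∃ v : EuclideanSpace ℝ (Fin d), ‖v‖ = 1 ∧ L v = M := by
    set y := (InnerProductSpace.toDual ℝ (EuclideanSpace ℝ (Fin d))).symm L with hy
    have hyL : ∀ u, L u = inner ℝ y u := by
      intro u
      have h : InnerProductSpace.toDual ℝ _ y = L :=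
        (InnerProductSpace.toDual ℝ _).apply_symm_apply L
      rw [← h]; rfl
    have hynorm : ‖y‖ = M := by rw [hy, LinearIsometryEquiv.norm_map]
    have hy0 : ‖y‖ ≠ 0 := by rw [hynorm]; exact hMpos.ne'
    refine ⟨‖y‖⁻¹ • y, ?_, ?_⟩
    · rw [norm_smul, norm_inv, norm_norm, inv_mul_cancel₀ hy0]
    · rw [hyL, real_inner_smul_right, real_inner_self_eq_norm_mul_norm, ← hynorm]
      field_simp
  set c : ℝ → EuclideanSpace ℝ (Fin d) := fun t => x₀ + t • v with hcdef
  have hc : ∀ t, HasDerivAt c v t := fun t => by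
    simpa [hcdef] using ((hasDerivAt_id t).smul_const v).const_add x₀
  set φ : ℝ → ℝ := fun t => (fderiv ℝ θ (c t)) v with hφdef
  have hθdiff : Differentiable ℝ θ := hθ.differentiable (by norm_num)
  have hg : ∀ t, HasDerivAt (fun t => θ (c t)) (φ t) t := fun t =>
    (hθdiff (c t)).hasFDerivAt.comp_hasDerivAt t (hc t)
  have hφCD : ContDiff ℝ 1 φ := by
    have hcCD : ContDiff ℝ 1 c := contDiff_const.add (contDiff_id.smul contDiff_const)
    have h1 : ContDiff ℝ 1 (fderiv ℝ θ) := hθ.fderiv_right (by norm_num)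
    exact (ContinuousLinearMap.apply ℝ ℝ v).contDiff.comp (h1.comp hcCD)
  set ψ := deriv φ with hψdef
  have hψcont : Continuous ψ := hφCD.continuous_deriv le_rfl
  have hφ' : ∀ s, HasDerivAt φ (ψ s) s := fun s => (hφCD.differentiable (by norm_num) s).hasDerivAt
  have hc0 : c 0 = x₀ := by simp [hcdef]
  have hφ0 : φ 0 = M := by rw [hφdef]; simp only [hc0]; exact hLv
  have hφle : ∀ t, φ t ≤ M := by
    intro t
    calc φ t ≤ |φ t| := le_abs_self _
    _ = ‖(fderiv ℝ θ (c t)) v‖ := rfl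
    _ ≤ ‖fderiv ℝ θ (c t)‖ * ‖v‖ := ContinuousLinearMap.le_opNorm _ v
    _ = ‖fderiv ℝ θ (c t)‖ := by rw [hvnorm, mul_one]
    _ ≤ M := hmax _
  -- second derivative of g vanishes at 0
  have hψ0 : ψ 0 = 0 := by
    have hmax0 : IsLocalMax φ 0 :=
      Filter.Eventually.of_forall (fun t => (hφle t).trans_eq hφ0.symm)
    exact hmax0.deriv_eq_zero
  -- small second derivative near 0
  obtain ⟨δ₂, hδ₂pos, hδ₂⟩ : ∃ δ > (0:ℝ), ∀ s : ℝ, |s| < δ → |ψ s| < 1 := by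
    have hca := hψcont.continuousAt (x := 0)
    rw [Metric.continuousAt_iff] at hca
    obtain ⟨δ, hδ, hball⟩ := hca 1 one_pos
    refine ⟨δ, hδ, fun s hs => ?_⟩
    have := hball (x := s) (by simpa [Real.dist_eq] using hs)
    simpa [Real.dist_eq, hψ0] using this
  -- lower bound for φ on [0, δ₂/2]
  have hφlow : ∀ s ∈ Set.Icc (0:ℝ) (δ₂/2), M - s ≤ φ s := by
    have hmono : MonotoneOn (fun s => φ s + s) (Set.Icc (0:ℝ) (δ₂/2)) := by
      apply monotoneOn_of_deriv_nonneg (convex_Icc _ _)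
      · exact ((hφCD.continuous).add continuous_id).continuousOn
      · intro s _
        exact ((hφ' s).add (hasDerivAt_id s)).differentiableAt.differentiableWithinAt
      · intro s hs
        rw [interior_Icc] at hs
        rw [show deriv (fun s => φ s + s) s = _ from ((hφ' s).add (hasDerivAt_id' (x := s))).deriv]
        have habs : |ψ s| < 1 := hδ₂ s (by rw [abs_of_pos hs.1]; linarith [hs.2])
        have := abs_lt.mp habs
        linarith
    intro s hs
    have h0 : (0:ℝ) ∈ Set.Icc (0:ℝ) (δ₂/2) := ⟨le_refl 0, by linarith⟩
    have h2 := hmono h0 hs hs.1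
    simp only [hφ0, add_zero] at h2
    linarith
  -- lower bound for g on [0, δ₂/2]
  have hglow : ∀ t ∈ Set.Icc (0:ℝ) (δ₂/2), M * t - t^2 ≤ θ (c t) - θ (c 0) := by
    have hmono : MonotoneOn (fun s => θ (c s) - (M * s - s^2)) (Set.Icc (0:ℝ) (δ₂/2)) := by
      apply monotoneOn_of_deriv_nonneg (convex_Icc _ _)
      · intro s _
        exact ((hg s).sub (((hasDerivAt_id s).const_mul M).sub
          (hasDerivAt_pow 2 s))).differentiableAt.continuousAt.continuousWithinAt
      · intro s _
        exact ((hg s).sub (((hasDerivAt_id s).const_mul M).sub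
          (hasDerivAt_pow 2 s))).differentiableAt.differentiableWithinAt
      · intro s hs
        rw [interior_Icc] at hs
        rw [show deriv (fun s => θ (c s) - (M * s - s ^ 2)) s = _ from ((hg s).sub (((hasDerivAt_id' (x := s)).const_mul M).sub (hasDerivAt_pow 2 s))).deriv]
        have hlow := hφlow s ⟨hs.1.le, hs.2.le⟩
        have hs1 : (0:ℝ) ≤ s := hs.1.le
        norm_num
        nlinarith
    intro t ht
    have h0 : (0:ℝ) ∈ Set.Icc (0:ℝ) (δ₂/2) := ⟨le_refl 0, by linarith [ht.2, ht.1]⟩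
    have h2 := hmono h0 ht ht.1
    simp only [mul_zero, ne_eq, OfNat.ofNat_ne_zero, not_false_eq_true, zero_pow, sub_zero] at h2
    linarith
  -- ω'' ≤ -4 near 0
  obtain ⟨δ₁, hδ₁pos, hδ₁⟩ : ∃ δ > (0:ℝ), ∀ s : ℝ, 0 < s → s < δ → ω'' s ≤ -4 := by
    have hev := hω''blow.eventually (eventually_le_atBot (-4 : ℝ))
    rw [eventually_nhdsWithin_iff, Metric.eventually_nhds_iff] at hev
    obtain ⟨δ, hδ, hball⟩ := hev
    exact ⟨δ, hδ, fun s h1 h2 =>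
      hball (by simpa [Real.dist_eq, abs_of_pos h1] using h2) h1⟩
  -- ω' s ≤ ω'0 - 4 s on (0, δ₁)
  have hω'bd : ∀ s : ℝ, 0 < s → s < δ₁ → ω' s ≤ ω'0 - 4 * s := by
    have hanti2 : AntitoneOn (fun u => ω' u + 4 * u) (Set.Ioo (0:ℝ) δ₁) := by
      apply antitoneOn_of_deriv_nonpos (convex_Ioo _ _)
      · intro u hu
        exact ((hω'' u hu.1).add
          ((hasDerivAt_id u).const_mul 4)).differentiableAt.continuousAt.continuousWithinAt
      · rw [interior_Ioo]
        intro u hu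
        exact ((hω'' u hu.1).add
          ((hasDerivAt_id u).const_mul 4)).differentiableAt.differentiableWithinAt
      · rw [interior_Ioo]
        intro u hu
        rw [show deriv (fun u => ω' u + 4 * u) u = _ from ((hω'' u hu.1).add ((hasDerivAt_id' (x := u)).const_mul 4)).deriv]
        have := hδ₁ u hu.1 hu.2
        linarith
    intro s hs hsδ
    have hlim : Tendsto (fun u => ω' u + 4 * u) (nhdsWithin 0 (Set.Ioi 0)) (nhds (ω'0 + 4 * 0)) :=
      hω'0.add (((continuous_const.mul continuous_id).tendsto 0).mono_left nhdsWithin_le_nhds)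
    have hev : ∀ᶠ u in nhdsWithin (0:ℝ) (Set.Ioi 0), ω' s + 4 * s ≤ ω' u + 4 * u := by
      filter_upwards [Ioo_mem_nhdsGT_of_mem (⟨le_refl 0, hs⟩ : (0:ℝ) ∈ Set.Ico 0 s)] with u hu
      exact hanti2 ⟨hu.1, hu.2.trans hsδ⟩ ⟨hs, hsδ⟩ hu.2.le
    have := ge_of_tendsto hlim hev
    linarith
  -- ω t ≤ ω'0 t - 2 t² on [0, δ₁/2]
  have hωbd : ∀ t ∈ Set.Icc (0:ℝ) (δ₁/2), ω t ≤ ω'0 * t - 2 * t^2 := by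
    have hmono : MonotoneOn (fun s => ω'0 * s - 2 * s^2 - ω s) (Set.Icc (0:ℝ) (δ₁/2)) := by
      apply monotoneOn_of_deriv_nonneg (convex_Icc _ _)
      · exact ((continuousOn_const.mul continuousOn_id).sub
          (continuousOn_const.mul (continuousOn_pow 2))).sub
          (hωc.mono (fun u hu => hu.1))
      · rw [interior_Icc]
        intro s hs
        exact ((((hasDerivAt_id s).const_mul ω'0).sub
          ((hasDerivAt_pow 2 s).const_mul 2)).sub (hω' s hs.1)).differentiableAt.differentiableWithinAt
      · rw [interior_Icc]
        intro s hs
        rw [show deriv (fun s => ω'0 * s - 2 * s ^ 2 - ω s) s = _ from ((((hasDerivAt_id' (x := s)).const_mul ω'0).sub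
          ((hasDerivAt_pow 2 s).const_mul 2)).sub (hω' s hs.1)).deriv]
        have := hω'bd s hs.1 (by linarith [hs.2, hδ₁pos])
        norm_num
        linarith
    intro t ht
    have h0 : (0:ℝ) ∈ Set.Icc (0:ℝ) (δ₁/2) := ⟨le_refl 0, by linarith [ht.2, ht.1]⟩
    have h2 := hmono h0 ht ht.1
    simp only [mul_zero, ne_eq, OfNat.ofNat_ne_zero, not_false_eq_true, zero_pow, sub_zero,
      hω0] at h2
    linarith
  -- combine at t = min (δ₂/2) (δ₁/2)
  set t := min (δ₂/2) (δ₁/2) with htdef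
  have htpos : 0 < t := lt_min (by linarith) (by linarith)
  have h1 := hglow t ⟨htpos.le, min_le_left _ _⟩
  have h2 := hωbd t ⟨htpos.le, min_le_right _ _⟩
  have hdist : dist (c t) x₀ = t := by
    simp [hcdef, dist_eq_norm, norm_smul, hvnorm, abs_of_pos htpos]
  have h3 : θ (c t) - θ (c 0) ≤ ω t := by
    calc θ (c t) - θ (c 0) ≤ |θ (c t) - θ x₀| := by rw [hc0]; exact le_abs_self _
    _ ≤ ω (dist (c t) x₀) := hmod _ _
    _ = ω t := by rw [hdist]
  rw [hMeq] at h1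
  have ht2 : 0 < t^2 := pow_pos htpos 2
  linarith
end

section
/- Suppose θ ∈ C²(ℝ^d) has modulus of continuity ω (i.e., |θ(x)−θ(y)| ≤ ω(|x−y|) for all x,y), and θ(x⁰) − θ(y⁰) = ω(ξ) where x⁰ − y⁰ = (ξ,0,…,0) with ξ > 0. Then for each coordinate direction j we have ∂_j θ(x⁰) = ∂_j θ(y⁰), and for j > 1, ∂_j θ(x⁰) = ∂_j θ(y⁰) = 0; moreover ω'(ξ⁻) ≤ ∂_1 θ(x⁰) ≤ ω'(ξ⁺). -/
open Real Set

/-- Right-sided derivative comparison: if `f y - f x ≤ g y - g x` eventually to the right of `x`,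
then the right derivatives satisfy `a ≤ b`. -/
lemma stmt4_aux_right {f g : ℝ → ℝ} {x a b : ℝ}
    (hf : HasDerivWithinAt f a (Set.Ioi x) x) (hg : HasDerivWithinAt g b (Set.Ioi x) x)
    (h : ∀ᶠ y in nhdsWithin x (Set.Ioi x), f y - f x ≤ g y - g x) : a ≤ b := by
  have hf' := (hasDerivWithinAt_iff_tendsto_slope' notMem_Ioi_self).1 hf
  have hg' := (hasDerivWithinAt_iff_tendsto_slope' notMem_Ioi_self).1 hg
  refine le_of_tendsto_of_tendsto hf' hg' ?_
  filter_upwards [h, self_mem_nhdsWithin] with y hy hy'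
  have hpos : (0:ℝ) < y - x := sub_pos.2 hy'
  rw [slope_def_field, slope_def_field]
  exact div_le_div_of_nonneg_right hy hpos.le

/-- Left-sided derivative comparison: if `f y - f x ≤ g y - g x` eventually to the left of `x`,
then the left derivatives satisfy `b ≤ a`. -/
lemma stmt4_aux_left {f g : ℝ → ℝ} {x a b : ℝ}
    (hf : HasDerivWithinAt f a (Set.Iio x) x) (hg : HasDerivWithinAt g b (Set.Iio x) x)
    (h : ∀ᶠ y in nhdsWithin x (Set.Iio x), f y - f x ≤ g y - g x) : b ≤ a := by
  have hf' := (hasDerivWithinAt_iff_tendsto_slope' notMem_Iio_self).1 hf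
  have hg' := (hasDerivWithinAt_iff_tendsto_slope' notMem_Iio_self).1 hg
  refine le_of_tendsto_of_tendsto hg' hf' ?_
  filter_upwards [h, self_mem_nhdsWithin] with y hy hy'
  have hneg : y - x < 0 := sub_neg.2 hy'
  rw [slope_def_field, slope_def_field, div_eq_mul_inv, div_eq_mul_inv]
  exact mul_le_mul_of_nonpos_right hy (inv_nonpos.2 hneg.le)

/-- The derivative of `t ↦ θ (z + t • v)` at `0` is `fderiv θ z v`. -/
lemma stmt4_aux_line {d : ℕ} {θ : EuclideanSpace ℝ (Fin d) → ℝ}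
    (hd : Differentiable ℝ θ) (z v : EuclideanSpace ℝ (Fin d)) :
    HasDerivAt (fun t : ℝ => θ (z + t • v)) (fderiv ℝ θ z v) 0 := by
  have h1 : HasDerivAt (fun t : ℝ => z + t • v) v 0 := by
    simpa using ((hasDerivAt_id (0:ℝ)).smul_const v).const_add z
  have h2 : HasFDerivAt θ (fderiv ℝ θ z) ((fun t : ℝ => z + t • v) 0) := by
    simpa using (hd z).hasFDerivAt
  exact h2.comp_hasDerivAt 0 h1

/-- If θ ∈ C²(ℝ^d) has modulus of continuity ω and the modulus is attained,
θ(x⁰) − θ(y⁰) = ω(ξ) with x⁰ − y⁰ = ξ e₁, ξ > 0, then all partial derivatives of θ agree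
at x⁰ and y⁰, those in directions j ≠ 1 vanish, and ω'(ξ⁻) ≤ ∂₁θ(x⁰) ≤ ω'(ξ⁺). -/
theorem stmt4 {d : ℕ} [NeZero d] (ω : ℝ → ℝ) (θ : EuclideanSpace ℝ (Fin d) → ℝ)
    (hωc : ContinuousOn ω (Set.Ici 0))
    (hωmono : MonotoneOn ω (Set.Ici 0))
    (hωconc : ConcaveOn ℝ (Set.Ici 0) ω)
    (hω0 : ω 0 = 0)
    (hθ : ContDiff ℝ 2 θ)
    (hmod : ∀ x y : EuclideanSpace ℝ (Fin d), |θ x - θ y| ≤ ω (dist x y))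
    (x₀ y₀ : EuclideanSpace ℝ (Fin d)) (ξ : ℝ) (hξ : 0 < ξ)
    (hxy : x₀ - y₀ = EuclideanSpace.single (0 : Fin d) ξ)
    (heq : θ x₀ - θ y₀ = ω ξ)
    (ωl ωr : ℝ)
    (hωl : HasDerivWithinAt ω ωl (Set.Iio ξ) ξ)
    (hωr : HasDerivWithinAt ω ωr (Set.Ioi ξ) ξ) :
    (∀ j : Fin d, fderiv ℝ θ x₀ (EuclideanSpace.single j 1)
        = fderiv ℝ θ y₀ (EuclideanSpace.single j 1)) ∧
    (∀ j : Fin d, j ≠ 0 → fderiv ℝ θ x₀ (EuclideanSpace.single j 1) = 0) ∧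
    ωl ≤ fderiv ℝ θ x₀ (EuclideanSpace.single (0 : Fin d) 1) ∧
    fderiv ℝ θ x₀ (EuclideanSpace.single (0 : Fin d) 1) ≤ ωr := by
  have hd : Differentiable ℝ θ := hθ.differentiable (by norm_num)
  -- distance from x₀ + w to y₀
  have hdistw : ∀ w : EuclideanSpace ℝ (Fin d),
      dist (x₀ + w) y₀ = ‖EuclideanSpace.single (0 : Fin d) ξ + w‖ := by
    intro w
    rw [dist_eq_norm]
    congr 1
    rw [← hxy]
    abel
  have hdist0 : dist x₀ y₀ = ξ := by
    rw [dist_eq_norm, hxy, EuclideanSpace.norm_single]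
    exact abs_of_pos hξ
  -- ωr is nonneg
  have hslope : ∀ s : ℝ, ξ < s → ω s ≤ ω ξ + ωr * (s - ξ) := by
    intro s hs
    have h1 : slope ω ξ s ≤ ωr :=
      hωconc.slope_le_of_hasDerivWithinAt_Ioi hξ.le (by exact le_of_lt (hξ.trans hs)) hs hωr
    rw [slope_def_field] at h1
    have h2 : 0 < s - ξ := sub_pos.2 hs
    calc ω s = ω ξ + ((ω s - ω ξ) / (s - ξ)) * (s - ξ) := by field_simp; ring
    _ ≤ ω ξ + ωr * (s - ξ) := by nlinarith
  have hωrnn : 0 ≤ ωr := by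
    have h1 := hslope (ξ + 1) (by linarith)
    have h2 : ω ξ ≤ ω (ξ + 1) := hωmono hξ.le (by simp only [Set.mem_Ici]; linarith) (by linarith)
    nlinarith
  -- part 1: partial derivatives agree
  have part1 : ∀ j : Fin d, fderiv ℝ θ x₀ (EuclideanSpace.single j 1)
      = fderiv ℝ θ y₀ (EuclideanSpace.single j 1) := by
    intro j
    set v := EuclideanSpace.single j (1:ℝ) with hv
    have hg : HasDerivAt (fun t : ℝ => θ (x₀ + t • v) - θ (y₀ + t • v))
        (fderiv ℝ θ x₀ v - fderiv ℝ θ y₀ v) 0 :=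
      (stmt4_aux_line hd x₀ v).sub (stmt4_aux_line hd y₀ v)
    have hmax : IsLocalMax (fun t : ℝ => θ (x₀ + t • v) - θ (y₀ + t • v)) 0 := by
      apply Filter.Eventually.of_forall
      intro t
      have h1 : θ (x₀ + t • v) - θ (y₀ + t • v) ≤ ω (dist (x₀ + t • v) (y₀ + t • v)) :=
        (le_abs_self _).trans (hmod _ _)
      have h2 : dist (x₀ + t • v) (y₀ + t • v) = ξ := by
        rw [dist_add_right, hdist0]
      simp only [h2] at h1
      simpa [heq] using h1
    have := hmax.hasDerivAt_eq_zero hg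
    linarith [sub_eq_zero.1 this]
  have part2 : ∀ j : Fin d, j ≠ 0 → fderiv ℝ θ x₀ (EuclideanSpace.single j 1) = 0 := by
    intro j hj
    set v := EuclideanSpace.single j (1:ℝ) with hv
    set c := ωr / (2 * ξ) with hc
    have hcnn : 0 ≤ c := div_nonneg hωrnn (by positivity)
    have hsq : HasDerivAt (fun t : ℝ => c * t ^ 2) 0 0 := by
      simpa using (hasDerivAt_pow 2 (0:ℝ)).const_mul c
    have hφ : HasDerivAt (fun t : ℝ => θ (x₀ + t • v) - c * t ^ 2)
        (fderiv ℝ θ x₀ v) 0 := by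
      have := (stmt4_aux_line hd x₀ v).sub hsq; rw [sub_zero] at this; exact this
    have hmax : IsLocalMax (fun t : ℝ => θ (x₀ + t • v) - c * t ^ 2) 0 := by
      apply Filter.Eventually.of_forall
      intro t
      -- distance computation
      have horth : (inner ℝ (EuclideanSpace.single (0:Fin d) ξ) (t • v) : ℝ) = 0 := by
        rw [inner_smul_right, EuclideanSpace.inner_single_left]
        simp [hv, EuclideanSpace.single_apply, Ne.symm hj]
      have hnsq : ‖EuclideanSpace.single (0:Fin d) ξ + t • v‖ ^ 2 = ξ ^ 2 + t ^ 2 := by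
        rw [norm_add_sq_real, horth, EuclideanSpace.norm_single, norm_smul,
          EuclideanSpace.norm_single]
        simp [abs_of_pos hξ, mul_pow, sq_abs]
      set s := ‖EuclideanSpace.single (0:Fin d) ξ + t • v‖ with hs
      have hsnn : 0 ≤ s := norm_nonneg _
      have hsge : ξ ≤ s := by nlinarith
      have hdists : dist (x₀ + t • v) y₀ = s := hdistw _
      have h1 : θ (x₀ + t • v) - θ y₀ ≤ ω s := by
        have := (le_abs_self _).trans (hmod (x₀ + t • v) y₀)
        rwa [hdists] at this
      -- ω s ≤ ω ξ + ωr * (s - ξ) ≤ ω ξ + c * t^2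
      have h2 : ω s ≤ ω ξ + ωr * (s - ξ) := by
        rcases eq_or_lt_of_le hsge with h | h
        · simp [← h]
        · exact hslope s h
      have h3' : (s - ξ) * (2 * ξ) ≤ t ^ 2 := by
        nlinarith [mul_le_mul_of_nonneg_left (show 2 * ξ ≤ s + ξ by linarith)
          (sub_nonneg.2 hsge)]
      have h3 : s - ξ ≤ t ^ 2 / (2 * ξ) := by
        rw [le_div_iff₀ (by positivity)]; linarith
      have h4 : ωr * (s - ξ) ≤ c * t ^ 2 := by
        rw [hc]
        calc ωr * (s - ξ) ≤ ωr * (t ^ 2 / (2 * ξ)) := by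
              exact mul_le_mul_of_nonneg_left h3 hωrnn
        _ = ωr / (2 * ξ) * t ^ 2 := by ring
      have h5 : θ x₀ = θ y₀ + ω ξ := by linarith
      simp only
      calc θ (x₀ + t • v) - c * t ^ 2 ≤ θ y₀ + ω s - c * t ^ 2 := by linarith
      _ ≤ θ y₀ + ω ξ := by linarith
      _ = θ (x₀ + (0:ℝ) • v) - c * (0:ℝ) ^ 2 := by simp [h5]
    exact hmax.hasDerivAt_eq_zero hφ
  -- part 3: ωl ≤ ∂₁θ(x₀) and ∂₁θ(x₀) ≤ ωr
  set e := EuclideanSpace.single (0:Fin d) (1:ℝ) with he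
  have hf : HasDerivAt (fun t : ℝ => θ (x₀ + t • e)) (fderiv ℝ θ x₀ e) 0 :=
    stmt4_aux_line hd x₀ e
  have hdist1 : ∀ t : ℝ, -ξ < t → dist (x₀ + t • e) y₀ = ξ + t := by
    intro t ht
    rw [hdistw]
    have hsum : EuclideanSpace.single (0:Fin d) ξ + t • e
        = EuclideanSpace.single (0:Fin d) (ξ + t) := by
      apply PiLp.ext
      intro i
      simp [he, EuclideanSpace.single_apply]
      split_ifs <;> ring
    rw [hsum, EuclideanSpace.norm_single]
    rw [Real.norm_eq_abs, abs_of_pos (by linarith)]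
  have hineq : ∀ t : ℝ, -ξ < t →
      θ (x₀ + t • e) - θ (x₀ + (0:ℝ) • e) ≤ ω (ξ + t) - ω (ξ + 0) := by
    intro t ht
    have h1 : θ (x₀ + t • e) - θ y₀ ≤ ω (ξ + t) := by
      have := (le_abs_self _).trans (hmod (x₀ + t • e) y₀)
      rwa [hdist1 t ht] at this
    have h2 : θ (x₀ + (0:ℝ) • e) = θ y₀ + ω ξ := by
      simp only [zero_smul, add_zero]
      linarith
    rw [h2]
    simp only [add_zero]
    linarith
  have part3r : fderiv ℝ θ x₀ e ≤ ωr := by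
    refine stmt4_aux_right (f := fun t : ℝ => θ (x₀ + t • e))
        (g := fun t : ℝ => ω (ξ + t)) hf.hasDerivWithinAt ?_ ?_
    · have hinner : HasDerivWithinAt (fun t : ℝ => ξ + t) 1 (Set.Ioi 0) 0 :=
        ((hasDerivAt_id (0:ℝ)).const_add ξ).hasDerivWithinAt
      have hmaps : Set.MapsTo (fun t : ℝ => ξ + t) (Set.Ioi 0) (Set.Ioi ξ) := by
        intro t ht; simp only [mem_Ioi] at *; linarith
      have hcomp := HasDerivWithinAt.comp (0:ℝ)
          (by simpa using hωr : HasDerivWithinAt ω ωr (Set.Ioi ξ) (ξ + 0)) hinner hmaps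
      simpa [Function.comp_def] using hcomp
    · filter_upwards [self_mem_nhdsWithin] with t ht
      exact hineq t (by simp only [mem_Ioi] at ht; linarith)
  have part3l : ωl ≤ fderiv ℝ θ x₀ e := by
    refine stmt4_aux_left (f := fun t : ℝ => θ (x₀ + t • e))
        (g := fun t : ℝ => ω (ξ + t)) hf.hasDerivWithinAt ?_ ?_
    · have hinner : HasDerivWithinAt (fun t : ℝ => ξ + t) 1 (Set.Iio 0) 0 :=
        ((hasDerivAt_id (0:ℝ)).const_add ξ).hasDerivWithinAt
      have hmaps : Set.MapsTo (fun t : ℝ => ξ + t) (Set.Iio 0) (Set.Iio ξ) := by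
        intro t ht; simp only [mem_Iio] at *; linarith
      have hcomp := HasDerivWithinAt.comp (0:ℝ)
          (by simpa using hωl : HasDerivWithinAt ω ωl (Set.Iio ξ) (ξ + 0)) hinner hmaps
      simpa [Function.comp_def] using hcomp
    · have hev : ∀ᶠ t in nhdsWithin (0:ℝ) (Set.Iio 0), -ξ < t :=
        (eventually_gt_nhds (by linarith : -ξ < (0:ℝ))).filter_mono nhdsWithin_le_nhds
      filter_upwards [hev] with t ht
      exact hineq t ht
  exact ⟨part1, part2, part3l, part3r⟩
end

section
/- Under the hypotheses of the previous lemma (θ ∈ C² with modulus of continuity ω, equality θ(x⁰) − θ(y⁰) = ω(ξ) at x⁰ − y⁰ = ξ e₁, ξ > 0, ω C² near ξ), one has Δθ(x⁰) − Δθ(y⁰) ≤ 4 ω''(ξ⁻). -/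
open Real Set Filter

private theorem deriv2_nonpos_of_max {h h' : ℝ → ℝ} {c δ : ℝ} (hδ : 0 < δ)
    (hd : ∀ t ∈ Ioo (-δ) δ, HasDerivAt h (h' t) t)
    (hd2 : HasDerivAt h' c 0)
    (hmax : ∀ t ∈ Ioo (-δ) δ, h t ≤ h 0) : c ≤ 0 := by
  by_contra hc
  push_neg at hc
  have hmem0 : (0:ℝ) ∈ Ioo (-δ) δ := by constructor <;> linarith
  have hnb : Ioo (-δ) δ ∈ nhds (0:ℝ) := Ioo_mem_nhds (by linarith) hδ
  have hlm : IsLocalMax h 0 := eventually_of_mem hnb hmax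
  have h'0 : h' 0 = 0 := hlm.hasDerivAt_eq_zero (hd 0 hmem0)
  have hsub : Ioi (0:ℝ) ⊆ {(0:ℝ)}ᶜ := fun x hx => ne_of_gt hx
  have hslope : Tendsto (slope h' 0) (nhdsWithin 0 (Ioi 0)) (nhds c) :=
    (hasDerivAt_iff_tendsto_slope.mp hd2).mono_left (nhdsWithin_mono _ hsub)
  have hev : ∀ᶠ t in nhdsWithin 0 (Ioi (0:ℝ)), 0 < slope h' 0 t :=
    hslope.eventually (eventually_gt_nhds hc)
  have hev' : ∀ᶠ t in nhdsWithin 0 (Ioi (0:ℝ)), 0 < h' t := by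
    filter_upwards [hev, self_mem_nhdsWithin] with t hst ht
    have : slope h' 0 t = h' t / t := by simp [slope_def_field, h'0]
    rw [this] at hst
    exact (div_pos_iff.mp hst).resolve_right (fun ⟨_, h2⟩ => absurd ht (by simp; linarith)) |>.1
  obtain ⟨ε, hε0, hε⟩ := (nhdsGT_basis_of_exists_gt (by exact ⟨1, zero_lt_one⟩ : ∃ x : ℝ, 0 < x)).eventually_iff.mp hev'
  set m := min (ε/2) (δ/2) with hm
  have hm0 : 0 < m := lt_min (by linarith) (by linarith)
  have hmδ : m < δ := lt_of_le_of_lt (min_le_right _ _) (by linarith)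
  have hmε : m < ε := lt_of_le_of_lt (min_le_left _ _) (by linarith)
  have hmono : StrictMonoOn h (Icc 0 m) := by
    apply strictMonoOn_of_deriv_pos (convex_Icc 0 m)
    · intro t ht
      exact (hd t ⟨by linarith [ht.1], lt_of_le_of_lt ht.2 hmδ⟩).continuousAt.continuousWithinAt
    · intro t ht
      rw [interior_Icc] at ht
      rw [(hd t ⟨by linarith [ht.1], lt_trans ht.2 hmδ⟩).deriv]
      exact hε ⟨ht.1, lt_trans ht.2 hmε⟩
  have : h 0 < h m := hmono ⟨le_refl 0, le_of_lt hm0⟩ ⟨le_of_lt hm0, le_refl m⟩ hm0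
  exact absurd (hmax m ⟨by linarith, hmδ⟩) (not_le.mpr this)

private theorem line1 {d : ℕ} (θ : EuclideanSpace ℝ (Fin d) → ℝ) (hθ : ContDiff ℝ 2 θ)
    (x v : EuclideanSpace ℝ (Fin d)) (t : ℝ) :
    HasDerivAt (fun s => θ (x + s • v)) (fderiv ℝ θ (x + t • v) v) t := by
  have hline : HasDerivAt (fun s : ℝ => x + s • v) v t := by
    simpa using ((hasDerivAt_id t).smul_const v).const_add x
  exact ((hθ.differentiable (by norm_num) _).hasFDerivAt).comp_hasDerivAt t hline

private theorem line2 {d : ℕ} (θ : EuclideanSpace ℝ (Fin d) → ℝ) (hθ : ContDiff ℝ 2 θ)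
    (x v : EuclideanSpace ℝ (Fin d)) (t : ℝ) :
    HasDerivAt (fun s => fderiv ℝ θ (x + s • v) v)
      (fderiv ℝ (fun z => fderiv ℝ θ z v) (x + t • v) v) t := by
  have hline : HasDerivAt (fun s : ℝ => x + s • v) v t := by
    simpa using ((hasDerivAt_id t).smul_const v).const_add x
  have hg : Differentiable ℝ (fun z => fderiv ℝ θ z v) :=
    ((hθ.fderiv_right (m := 1) (by norm_num)).differentiable (by norm_num)).clm_apply
      (differentiable_const v)
  exact (hg _).hasFDerivAt.comp_hasDerivAt t hline

/-- Under the hypotheses of the previous lemma (θ ∈ C² with modulus of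
continuity ω, equality θ(x⁰) − θ(y⁰) = ω(ξ) at x⁰ − y⁰ = ξ e₁, ξ > 0, ω C² near ξ),
one has Δθ(x⁰) − Δθ(y⁰) ≤ 4 ω''(ξ⁻). -/
theorem stmt5 {d : ℕ} [NeZero d] (ω ω' ω'' : ℝ → ℝ)
    (θ : EuclideanSpace ℝ (Fin d) → ℝ)
    (hωc : ContinuousOn ω (Set.Ici 0))
    (hωmono : MonotoneOn ω (Set.Ici 0))
    (hωconc : ConcaveOn ℝ (Set.Ici 0) ω)
    (hω0 : ω 0 = 0)
    (hθ : ContDiff ℝ 2 θ)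
    (hmod : ∀ x y : EuclideanSpace ℝ (Fin d), |θ x - θ y| ≤ ω (dist x y))
    (x₀ y₀ : EuclideanSpace ℝ (Fin d)) (ξ : ℝ) (hξ : 0 < ξ)
    (hxy : x₀ - y₀ = EuclideanSpace.single (0 : Fin d) ξ)
    (heq : θ x₀ - θ y₀ = ω ξ)
    -- ω is C² in a neighborhood (a,b) of ξ, with first and second derivatives ω', ω'':
    (a b : ℝ) (ha : a < ξ) (hb : ξ < b) (ha0 : 0 < a)
    (hω' : ∀ η ∈ Set.Ioo a b, HasDerivAt ω (ω' η) η)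
    (hω'' : ∀ η ∈ Set.Ioo a b, HasDerivAt ω' (ω'' η) η)
    (hω''cont : ContinuousOn ω'' (Set.Ioo a b)) :
    (∑ j : Fin d, fderiv ℝ (fun z => fderiv ℝ θ z (EuclideanSpace.single j 1)) x₀
        (EuclideanSpace.single j 1)) -
    (∑ j : Fin d, fderiv ℝ (fun z => fderiv ℝ θ z (EuclideanSpace.single j 1)) y₀
        (EuclideanSpace.single j 1)) ≤ 4 * ω'' ξ := by
  set D : EuclideanSpace ℝ (Fin d) → Fin d → ℝ := fun x j =>
    fderiv ℝ (fun z => fderiv ℝ θ z (EuclideanSpace.single j 1)) x (EuclideanSpace.single j 1)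
    with hD
  -- Claim 1: for j ≠ 0, D x₀ j - D y₀ j ≤ 0
  have claim1 : ∀ j : Fin d, j ≠ 0 → D x₀ j - D y₀ j ≤ 0 := by
    intro j hj
    set e := EuclideanSpace.single j (1:ℝ) with he
    set h : ℝ → ℝ := fun t => θ (x₀ + t • e) - θ (y₀ + t • e) with hh
    set h' : ℝ → ℝ := fun t => fderiv ℝ θ (x₀ + t • e) e - fderiv ℝ θ (y₀ + t • e) e with hh'
    have hd : ∀ t ∈ Ioo (-(1:ℝ)) 1, HasDerivAt h (h' t) t :=
      fun t _ => (line1 θ hθ x₀ e t).sub (line1 θ hθ y₀ e t)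
    have hd2 : HasDerivAt h' (D x₀ j - D y₀ j) 0 := by
      have := (line2 θ hθ x₀ e 0).sub (line2 θ hθ y₀ e 0)
      simp only [zero_smul, add_zero] at this; exact this
    have hmax : ∀ t ∈ Ioo (-(1:ℝ)) 1, h t ≤ h 0 := by
      intro t _
      have hdist : dist (x₀ + t • e) (y₀ + t • e) = ξ := by
        rw [dist_eq_norm]
        have : (x₀ + t • e) - (y₀ + t • e) = x₀ - y₀ := by abel
        rw [this, hxy, EuclideanSpace.norm_single]
        exact abs_of_pos hξ
      have h0 : h 0 = ω ξ := by simp [hh, heq]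
      have : h t ≤ ω ξ := by
        calc h t ≤ |θ (x₀ + t • e) - θ (y₀ + t • e)| := le_abs_self _
        _ ≤ ω (dist (x₀ + t • e) (y₀ + t • e)) := hmod _ _
        _ = ω ξ := by rw [hdist]
      rw [h0]; exact this
    exact deriv2_nonpos_of_max one_pos hd hd2 hmax
  -- Claim 2: D x₀ 0 - D y₀ 0 ≤ 4 * ω'' ξ
  have claim2 : D x₀ 0 - D y₀ 0 ≤ 4 * ω'' ξ := by
    set e := EuclideanSpace.single (0 : Fin d) (1:ℝ) with he
    set δ := min ((ξ - a)/2) ((b - ξ)/2) with hδdef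
    have hδ0 : 0 < δ := lt_min (by linarith) (by linarith)
    have hmemI : ∀ t ∈ Ioo (-δ) δ, ξ + 2*t ∈ Ioo a b := by
      intro t ht
      have h1 : -((ξ - a)/2) < t := lt_of_le_of_lt (neg_le_neg (min_le_left _ _)) ht.1
      have h2 : t < (b - ξ)/2 := lt_of_lt_of_le ht.2 (min_le_right _ _)
      constructor <;> [linarith; linarith]
    set h : ℝ → ℝ := fun t => θ (x₀ + t • e) - θ (y₀ + t • (-e)) - ω (ξ + 2*t) with hh
    set h' : ℝ → ℝ := fun t =>
      fderiv ℝ θ (x₀ + t • e) e - fderiv ℝ θ (y₀ + t • (-e)) (-e) - ω' (ξ + 2*t) * 2 with hh'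
    have hlin : ∀ t : ℝ, HasDerivAt (fun s : ℝ => ξ + 2*s) 2 t := by
      intro t
      simpa using ((hasDerivAt_id t).const_mul 2).const_add ξ
    have hd : ∀ t ∈ Ioo (-δ) δ, HasDerivAt h (h' t) t := by
      intro t ht
      have hω : HasDerivAt (fun s : ℝ => ω (ξ + 2*s)) (ω' (ξ + 2*t) * 2) t := by
        have := (hω' _ (hmemI t ht)).comp t (hlin t)
        exact this
      exact ((line1 θ hθ x₀ e t).sub (line1 θ hθ y₀ (-e) t)).sub hω
    have hy : fderiv ℝ (fun z => fderiv ℝ θ z (-e)) y₀ (-e) = D y₀ 0 := by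
      have hfun : (fun z => fderiv ℝ θ z (-e)) = fun z => -(fderiv ℝ θ z e) := by
        ext z; simp
      rw [hfun, fderiv_fun_neg]
      simp [hD, he]
    have hd2 : HasDerivAt h' (D x₀ 0 - D y₀ 0 - 4 * ω'' ξ) 0 := by
      have hω2 : HasDerivAt (fun s : ℝ => ω' (ξ + 2*s) * 2) (ω'' ξ * 2 * 2) 0 := by
        have hmem : ξ + 2*0 ∈ Ioo a b := by norm_num; exact ⟨ha, hb⟩
        have := ((hω'' _ hmem).comp 0 (hlin 0)).mul_const 2
        simp only [Function.comp] at this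
        rw [mul_zero, add_zero] at this; exact this
      have := ((line2 θ hθ x₀ e 0).sub (line2 θ hθ y₀ (-e) 0)).sub hω2
      simp only [zero_smul, add_zero] at this
      rw [hy] at this
      convert this using 1
      · rfl
      · rfl
      · rfl
      · simp only [hD, he]; ring
    have hmax : ∀ t ∈ Ioo (-δ) δ, h t ≤ h 0 := by
      intro t ht
      have hpos : 0 < ξ + 2*t := lt_trans ha0 (hmemI t ht).1
      have hdist : dist (x₀ + t • e) (y₀ + t • (-e)) = ξ + 2*t := by
        rw [dist_eq_norm]
        have h1 : (x₀ + t • e) - (y₀ + t • (-e)) = (x₀ - y₀) + (2*t) • e := by module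
        have h2 : EuclideanSpace.single (0 : Fin d) ξ + (2*t) • e
            = EuclideanSpace.single (0 : Fin d) (ξ + 2*t) := by
          ext i
          simp only [he, PiLp.add_apply, PiLp.smul_apply, EuclideanSpace.single_apply,
            smul_eq_mul]
          by_cases hi : i = 0 <;> simp [hi]
        rw [h1, hxy, h2, EuclideanSpace.norm_single]
        exact abs_of_pos hpos
      have h0 : h 0 = 0 := by
        simp [hh, heq]
      have : h t ≤ 0 := by
        have : θ (x₀ + t • e) - θ (y₀ + t • (-e)) ≤ ω (ξ + 2*t) := by
          calc θ (x₀ + t • e) - θ (y₀ + t • (-e))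
              ≤ |θ (x₀ + t • e) - θ (y₀ + t • (-e))| := le_abs_self _
          _ ≤ ω (dist (x₀ + t • e) (y₀ + t • (-e))) := hmod _ _
          _ = ω (ξ + 2*t) := by rw [hdist]
        simp only [hh]; linarith
      rw [h0]; exact this
    have := deriv2_nonpos_of_max hδ0 hd hd2 hmax
    linarith
  -- Combine
  rw [← Finset.sum_sub_distrib]
  calc ∑ j : Fin d, (D x₀ j - D y₀ j)
      ≤ ∑ j : Fin d, (if j = 0 then 4 * ω'' ξ else 0) := by
        apply Finset.sum_le_sum
        intro j _
        by_cases hj : j = 0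
        · simp only [hj, if_pos rfl]; exact claim2
        · simp only [if_neg hj]; exact claim1 j hj
    _ = 4 * ω'' ξ := by simp
end
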